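/- Let g_sr and g_rr be independent real random variables on a probability space, with g_sr ~ Gamma(m_sr, θ_sr) and g_rr ~ Gamma(m_rr, θ_rr) for integers m_sr, m_rr ≥ 1 and scales θ_sr, θ_rr > 0. Fix P_s, P_r > 0, C ∈ [0,1], r > 0 and set γ = 2^{2r} − 1. Then the S–R outage probability P[(P_s·g_sr + P_r·g_rr + 1)² − (P_r·g_rr·C)² < 2^{2r}·((P_r·g_rr + 1)² − (P_r·g_rr·C)²)] equals 1 − (1/(Γ(m_sr)·Γ(m_rr)·θ_rr^{m_rr})) · ∫_0^∞ x^{m_rr−1} · e^{−x/θ_rr} · Γ(m_sr, ((P_r·x + 1)/(P_s·θ_sr))·Ψ_γ(P_r·x·C/(P_r·x + 1))) dx. -/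

import Mathlib

open MeasureTheory ProbabilityTheory Real

/-- `Psi γ x = √(1 + γ(1 - x²)) - 1`. -/
noncomputable def Psi (γ x : ℝ) : ℝ := Real.sqrt (1 + γ * (1 - x ^ 2)) - 1

/-- The Gamma(m, θ) law (integer shape `m ≥ 1`, scale `θ > 0`), given by its density
`x^(m-1) e^(-x/θ) / ((m-1)! θ^m)` on `[0, ∞)`. -/
noncomputable def gammaLaw (m : ℕ) (θ : ℝ) : Measure ℝ :=
  volume.withDensity fun x =>
    ENNReal.ofReal
      (if 0 ≤ x then x ^ (m - 1) * Real.exp (-x / θ) / ((Nat.factorial (m - 1) : ℝ) * θ ^ m)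
       else 0)

/-- Upper incomplete gamma function `Γ(a, y) = ∫_y^∞ t^(a-1) e^(-t) dt` for integer `a`. -/
noncomputable def uGamma (a : ℕ) (y : ℝ) : ℝ :=
  ∫ t in Set.Ioi y, t ^ (a - 1) * Real.exp (-t)

open Set

lemma integrableOn_f (m : ℕ) (hm : 1 ≤ m) {y : ℝ} (hy : 0 ≤ y) :
    IntegrableOn (fun t : ℝ => t ^ (m - 1) * Real.exp (-t)) (Set.Ioi y) := by
  have h0 : IntegrableOn (fun t : ℝ => Real.exp (-t) * t ^ ((m : ℝ) - 1)) (Set.Ioi 0) :=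
    Real.GammaIntegral_convergent (by exact_mod_cast hm)
  have h1 : IntegrableOn (fun t : ℝ => t ^ (m - 1) * Real.exp (-t)) (Set.Ioi 0) := by
    refine h0.congr_fun (fun x hx => ?_) measurableSet_Ioi
    have : ((m : ℝ) - 1) = ((m - 1 : ℕ) : ℝ) := by
      have := Nat.cast_sub (R := ℝ) hm (n := m) (m := 1); push_cast at this ⊢; linarith
    beta_reduce
    rw [this, Real.rpow_natCast, mul_comm]
  exact h1.mono_set (Set.Ioi_subset_Ioi hy)

lemma uGamma_nonneg (m : ℕ) {y : ℝ} (hy : 0 ≤ y) : 0 ≤ uGamma m y := by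
  refine setIntegral_nonneg measurableSet_Ioi (fun t ht => ?_)
  have : (0:ℝ) ≤ t := le_trans hy (le_of_lt ht)
  positivity

lemma uGamma_zero (m : ℕ) (hm : 1 ≤ m) : uGamma m 0 = Real.Gamma m := by
  rw [Real.Gamma_eq_integral (by exact_mod_cast hm : (0:ℝ) < m)]
  refine setIntegral_congr_fun measurableSet_Ioi (fun x hx => ?_)
  have : ((m : ℝ) - 1) = ((m - 1 : ℕ) : ℝ) := by
    have := Nat.cast_sub (R := ℝ) hm (n := m) (m := 1); push_cast at this ⊢; linarith
  rw [this, Real.rpow_natCast, mul_comm]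

lemma uGamma_le (m : ℕ) (hm : 1 ≤ m) {y : ℝ} (hy : 0 ≤ y) : uGamma m y ≤ Real.Gamma m := by
  rw [← uGamma_zero m hm]
  refine setIntegral_mono_set (integrableOn_f m hm le_rfl) ?_ ?_
  · filter_upwards [ae_restrict_mem measurableSet_Ioi] with t ht
    have : (0:ℝ) < t := ht
    positivity
  · exact HasSubset.Subset.eventuallyLE (Set.Ioi_subset_Ioi hy)

lemma gammaLaw_eq (m : ℕ) (hm : 1 ≤ m) {θ : ℝ} (hθ : 0 < θ) :
    gammaLaw m θ = gammaMeasure m (1/θ) := by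
  unfold gammaLaw gammaMeasure
  congr 1
  ext x
  rw [gammaPDF_eq]
  congr 1
  split_ifs with hx
  · have hc : ((m : ℝ) - 1) = ((m - 1 : ℕ) : ℝ) := by
      have := Nat.cast_sub (R := ℝ) hm (n := m) (m := 1); push_cast at this ⊢; linarith
    rw [hc, Real.rpow_natCast]
    rw [Real.rpow_natCast]
    rw [show Real.Gamma m = (Nat.factorial (m-1) : ℝ) by
      rw [show (m : ℝ) = ((m - 1 : ℕ) : ℝ) + 1 by
        have := Nat.cast_sub (R := ℝ) hm (n := m) (m := 1); push_cast at this ⊢; linarith]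
      exact Real.Gamma_nat_eq_factorial _]
    have hfac : (0:ℝ) < (Nat.factorial (m-1) : ℝ) := by positivity
    rw [show -(1/θ * x) = -x/θ by field_simp]
    field_simp
    ring_nf
    rw [mul_assoc, ← mul_pow, mul_inv_cancel₀ hθ.ne', one_pow, mul_one]
  · rfl

theorem gammaLaw_prob (m : ℕ) (hm : 1 ≤ m) {θ : ℝ} (hθ : 0 < θ) :
    IsProbabilityMeasure (gammaLaw m θ) := by
  rw [gammaLaw_eq m hm hθ]
  exact isProbabilityMeasure_gammaMeasure (by exact_mod_cast hm) (by positivity)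

lemma gammaLaw_Iio_zero (m : ℕ) (θ : ℝ) : gammaLaw m θ (Set.Iio 0) = 0 := by
  unfold gammaLaw
  rw [withDensity_apply _ measurableSet_Iio]
  rw [setLIntegral_congr_fun (g := fun _ => 0) measurableSet_Iio]
  · simp
  · intro x (hx : x < 0)
    beta_reduce
    rw [if_neg (not_le.mpr hx)]
    simp

lemma integrableOn_density (m : ℕ) (hm : 1 ≤ m) {θ : ℝ} (hθ : 0 < θ) {t : ℝ} (ht : 0 ≤ t) :
    IntegrableOn (fun x : ℝ => x ^ (m - 1) * Real.exp (-x / θ)) (Set.Ioi t) := by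
  have key : ∀ x : ℝ, x ^ (m - 1) * Real.exp (-x / θ)
      = θ ^ (m - 1) * ((θ⁻¹ * x) ^ (m - 1) * Real.exp (-(θ⁻¹ * x))) := by
    intro x
    rw [show -(θ⁻¹ * x) = -x / θ by field_simp, mul_pow, ← mul_assoc, ← mul_assoc, ← mul_pow,
      mul_inv_cancel₀ hθ.ne', one_pow, one_mul]
  simp_rw [key]
  have h2 : IntegrableOn (fun x : ℝ => (θ⁻¹ * x) ^ (m - 1) * Real.exp (-(θ⁻¹ * x)))
      (Set.Ioi t) :=
    (integrableOn_Ioi_comp_mul_left_iff (fun y : ℝ => y ^ (m - 1) * Real.exp (-y)) t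
      (inv_pos.mpr hθ)).mpr (integrableOn_f m hm (by positivity))
  exact h2.const_mul _

lemma integral_density_Ioi (m : ℕ) (hm : 1 ≤ m) {θ : ℝ} (hθ : 0 < θ) (t : ℝ) :
    ∫ x in Set.Ioi t, x ^ (m - 1) * Real.exp (-x / θ) = θ ^ m * uGamma m (t / θ) := by
  have key : ∀ x : ℝ, x ^ (m - 1) * Real.exp (-x / θ)
      = θ ^ (m - 1) * ((θ⁻¹ * x) ^ (m - 1) * Real.exp (-(θ⁻¹ * x))) := by
    intro x
    rw [show -(θ⁻¹ * x) = -x / θ by field_simp, mul_pow, ← mul_assoc, ← mul_assoc, ← mul_pow,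
      mul_inv_cancel₀ hθ.ne', one_pow, one_mul]
  simp_rw [key]
  rw [MeasureTheory.integral_const_mul]
  rw [MeasureTheory.integral_comp_mul_left_Ioi
    (fun y : ℝ => y ^ (m - 1) * Real.exp (-y)) t (inv_pos.mpr hθ)]
  rw [smul_eq_mul, inv_inv]
  rw [show θ⁻¹ * t = t / θ by field_simp]
  rw [← mul_assoc, ← pow_succ, Nat.sub_add_cancel hm]
  rfl

lemma gammaLaw_Ici (m : ℕ) (hm : 1 ≤ m) {θ : ℝ} (hθ : 0 < θ) {t : ℝ} (ht : 0 ≤ t) :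
    gammaLaw m θ (Set.Ici t) = ENNReal.ofReal (uGamma m (t / θ) / Real.Gamma m) := by
  unfold gammaLaw
  rw [withDensity_apply _ measurableSet_Ici]
  have h1 : ∫⁻ x in Set.Ici t, ENNReal.ofReal
      (if 0 ≤ x then x ^ (m - 1) * Real.exp (-x / θ) / ((Nat.factorial (m - 1) : ℝ) * θ ^ m)
       else 0)
      = ∫⁻ x in Set.Ici t, ENNReal.ofReal
      (x ^ (m - 1) * Real.exp (-x / θ) / ((Nat.factorial (m - 1) : ℝ) * θ ^ m)) := by
    refine setLIntegral_congr_fun measurableSet_Ici ?_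
    intro x hx
    beta_reduce
    rw [if_pos (le_trans ht hx)]
  rw [h1]
  have hint : IntegrableOn
      (fun x : ℝ => x ^ (m - 1) * Real.exp (-x / θ) / ((Nat.factorial (m - 1) : ℝ) * θ ^ m))
      (Set.Ici t) := by
    rw [integrableOn_Ici_iff_integrableOn_Ioi]
    exact (integrableOn_density m hm hθ ht).div_const _
  rw [← MeasureTheory.ofReal_integral_eq_lintegral_ofReal hint]
  · congr 1
    rw [MeasureTheory.integral_Ici_eq_integral_Ioi]
    rw [MeasureTheory.integral_div, integral_density_Ioi m hm hθ t]
    rw [show Real.Gamma m = (Nat.factorial (m-1) : ℝ) by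
      rw [show (m : ℝ) = ((m - 1 : ℕ) : ℝ) + 1 by
        have := Nat.cast_sub (R := ℝ) hm (n := m) (m := 1); push_cast at this ⊢; linarith]
      exact Real.Gamma_nat_eq_factorial _]
    have hfac : (0:ℝ) < (Nat.factorial (m-1) : ℝ) := by positivity
    field_simp
  · filter_upwards [ae_restrict_mem measurableSet_Ici] with x hx
    have hx0 : (0:ℝ) ≤ x := le_trans ht hx
    positivity

lemma gammaLaw_Iio (m : ℕ) (hm : 1 ≤ m) {θ : ℝ} (hθ : 0 < θ) {t : ℝ} (ht : 0 ≤ t) :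
    gammaLaw m θ (Set.Iio t) = ENNReal.ofReal (1 - uGamma m (t / θ) / Real.Gamma m) := by
  have := gammaLaw_prob m hm hθ
  have h : gammaLaw m θ (Set.Iio t) = 1 - gammaLaw m θ (Set.Ici t) := by
    rw [← prob_compl_eq_one_sub measurableSet_Ici, compl_Ici]
  rw [h, gammaLaw_Ici m hm hθ ht]
  have hG : (0:ℝ) < Real.Gamma m := Real.Gamma_pos_of_pos (by exact_mod_cast hm)
  have h1 : uGamma m (t / θ) / Real.Gamma m ≤ 1 := by
    rw [div_le_one hG]
    exact uGamma_le m hm (by positivity)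
  have h0 : 0 ≤ uGamma m (t / θ) / Real.Gamma m := by
    have := uGamma_nonneg m (y := t / θ) (by positivity)
    positivity
  rw [ENNReal.ofReal_sub _ h0, ENNReal.ofReal_one]

lemma Psi_nonneg {γ x : ℝ} (hγ : 0 ≤ γ) (hx : x ^ 2 ≤ 1) : 0 ≤ Psi γ x := by
  unfold Psi
  have h1 : Real.sqrt 1 ≤ Real.sqrt (1 + γ * (1 - x ^ 2)) :=
    Real.sqrt_le_sqrt (by nlinarith)
  rw [Real.sqrt_one] at h1
  linarith

lemma frac_mem {b C : ℝ} (hb : 0 ≤ b) (hC0 : 0 ≤ C) (hC1 : C ≤ 1) :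
    0 ≤ b * C / (b + 1) ∧ b * C / (b + 1) ≤ 1 := by
  have hB : (0:ℝ) < b + 1 := by linarith
  refine ⟨by positivity, ?_⟩
  rw [div_le_one hB]
  nlinarith

lemma event_iff' {s b C γ' : ℝ} (hs : 0 ≤ s) (hb : 0 ≤ b)
    (hC0 : 0 ≤ C) (hC1 : C ≤ 1) (hγ' : 1 ≤ γ') :
    ((s + b + 1) ^ 2 - (b * C) ^ 2 < γ' * ((b + 1) ^ 2 - (b * C) ^ 2))
      ↔ s < (b + 1) * Psi (γ' - 1) (b * C / (b + 1)) := by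
  have hB : (0:ℝ) < b + 1 := by linarith
  have hx0 : 0 ≤ b * C / (b + 1) := by positivity
  have hx1 : b * C / (b + 1) ≤ 1 := by rw [div_le_one hB]; nlinarith
  have hx2 : (b * C / (b + 1)) ^ 2 ≤ 1 := by
    nlinarith [mul_nonneg (by linarith : (0:ℝ) ≤ 1 - b * C / (b + 1))
      (by linarith : (0:ℝ) ≤ 1 + b * C / (b + 1))]
  have hc : 0 ≤ 1 + (γ' - 1) * (1 - (b * C / (b + 1)) ^ 2) := by
    nlinarith [mul_nonneg (by linarith : (0:ℝ) ≤ γ' - 1)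
      (by linarith : (0:ℝ) ≤ 1 - (b * C / (b + 1)) ^ 2)]
  have hK : γ' * (b + 1) ^ 2 - (γ' - 1) * (b * C) ^ 2
      = (b + 1) ^ 2 * (1 + (γ' - 1) * (1 - (b * C / (b + 1)) ^ 2)) := by
    field_simp
    ring
  have hsq : Real.sqrt (γ' * (b + 1) ^ 2 - (γ' - 1) * (b * C) ^ 2)
      = (b + 1) * Real.sqrt (1 + (γ' - 1) * (1 - (b * C / (b + 1)) ^ 2)) := by
    rw [hK, Real.sqrt_mul (by positivity), Real.sqrt_sq hB.le]
  rw [show ((s + b + 1) ^ 2 - (b * C) ^ 2 < γ' * ((b + 1) ^ 2 - (b * C) ^ 2))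
      ↔ (s + (b + 1)) ^ 2 < γ' * (b + 1) ^ 2 - (γ' - 1) * (b * C) ^ 2 by
    constructor <;> intro h <;> nlinarith]
  rw [← Real.lt_sqrt (show (0:ℝ) ≤ s + (b + 1) by linarith), hsq]
  unfold Psi
  constructor <;> intro h <;> nlinarith

lemma event_iff {u v P_s P_r C γ' : ℝ} (hu : 0 ≤ u) (hv : 0 ≤ v)
    (hP_s : 0 < P_s) (hP_r : 0 < P_r) (hC0 : 0 ≤ C) (hC1 : C ≤ 1) (hγ' : 1 ≤ γ') :
    ((P_s * u + P_r * v + 1) ^ 2 - (P_r * v * C) ^ 2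
        < γ' * ((P_r * v + 1) ^ 2 - (P_r * v * C) ^ 2))
      ↔ u < ((P_r * v + 1) / P_s) * Psi (γ' - 1) (P_r * v * C / (P_r * v + 1)) := by
  rw [event_iff' (by positivity) (by positivity) hC0 hC1 hγ']
  rw [div_mul_eq_mul_div, lt_div_iff₀ hP_s, mul_comm u P_s]

/-- Continuous extension of `uGamma` agreeing on `[0, ∞)`. -/
noncomputable def phi (m : ℕ) (y : ℝ) : ℝ :=
  Real.Gamma m - ∫ t in (0:ℝ)..y, t ^ (m - 1) * Real.exp (-t)

lemma continuous_phi (m : ℕ) : Continuous (phi m) := by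
  unfold phi
  apply Continuous.sub continuous_const
  apply intervalIntegral.continuous_primitive
  · intro a b
    exact (Continuous.intervalIntegrable (by continuity) a b)

lemma phi_eq (m : ℕ) (hm : 1 ≤ m) {y : ℝ} (hy : 0 ≤ y) : phi m y = uGamma m y := by
  unfold phi uGamma
  rw [intervalIntegral.integral_of_le hy]
  have hsplit : (∫ t in Set.Ioc 0 y, t ^ (m - 1) * Real.exp (-t))
      + (∫ t in Set.Ioi y, t ^ (m - 1) * Real.exp (-t))
      = ∫ t in Set.Ioi (0:ℝ), t ^ (m - 1) * Real.exp (-t) := by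
    rw [← MeasureTheory.setIntegral_union]
    · rw [Set.Ioc_union_Ioi_eq_Ioi hy]
    · exact Set.Ioc_disjoint_Ioi le_rfl
    · exact measurableSet_Ioi
    · exact (integrableOn_f m hm le_rfl).mono_set Set.Ioc_subset_Ioi_self
    · exact integrableOn_f m hm hy
  have h0 : (∫ t in Set.Ioi (0:ℝ), t ^ (m - 1) * Real.exp (-t)) = Real.Gamma m :=
    uGamma_zero m hm
  linarith

noncomputable def dens (m : ℕ) (θ : ℝ) (x : ℝ) : ℝ :=
  if 0 ≤ x then x ^ (m - 1) * Real.exp (-x / θ) / ((Nat.factorial (m - 1) : ℝ) * θ ^ m) else 0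

lemma gammaLaw_eq_dens (m : ℕ) (θ : ℝ) :
    gammaLaw m θ = volume.withDensity (fun x => ENNReal.ofReal (dens m θ x)) := rfl

lemma dens_nonneg (m : ℕ) {θ : ℝ} (hθ : 0 < θ) (x : ℝ) : 0 ≤ dens m θ x := by
  unfold dens
  split_ifs with hx
  · positivity
  · exact le_refl 0

lemma measurable_dens (m : ℕ) (θ : ℝ) : Measurable (dens m θ) := by
  unfold dens
  apply Measurable.ite measurableSet_Ici <;> fun_prop

lemma lintegral_gammaLaw (m : ℕ) (θ : ℝ) {g : ℝ → ENNReal} (hg : Measurable g) :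
    ∫⁻ v, g v ∂(gammaLaw m θ) = ∫⁻ v, ENNReal.ofReal (dens m θ v) * g v := by
  rw [gammaLaw_eq_dens, lintegral_withDensity_eq_lintegral_mul volume
    (show Measurable fun x => ENNReal.ofReal (dens m θ x) from
      ENNReal.measurable_ofReal.comp (measurable_dens m θ)) hg]
  rfl

theorem stmt_0
    {Ω : Type*} [MeasurableSpace Ω] (μ : Measure Ω) [IsProbabilityMeasure μ]
    (g_sr g_rr : Ω → ℝ) (hg_sr : Measurable g_sr) (hg_rr : Measurable g_rr)
    (hindep : IndepFun g_sr g_rr μ)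
    (m_sr m_rr : ℕ) (hm_sr : 1 ≤ m_sr) (hm_rr : 1 ≤ m_rr)
    (θ_sr θ_rr : ℝ) (hθ_sr : 0 < θ_sr) (hθ_rr : 0 < θ_rr)
    (hlaw_sr : μ.map g_sr = gammaLaw m_sr θ_sr)
    (hlaw_rr : μ.map g_rr = gammaLaw m_rr θ_rr)
    (P_s P_r : ℝ) (hP_s : 0 < P_s) (hP_r : 0 < P_r)
    (C : ℝ) (hC : C ∈ Set.Icc (0 : ℝ) 1)
    (r : ℝ) (hr : 0 < r) :
    (μ {ω | (P_s * g_sr ω + P_r * g_rr ω + 1) ^ 2 - (P_r * g_rr ω * C) ^ 2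
          < (2 : ℝ) ^ (2 * r) * ((P_r * g_rr ω + 1) ^ 2 - (P_r * g_rr ω * C) ^ 2)}).toReal
      = 1 - (1 / (Real.Gamma (m_sr : ℝ) * Real.Gamma (m_rr : ℝ) * θ_rr ^ m_rr)) *
          ∫ x in Set.Ioi (0 : ℝ),
            x ^ (m_rr - 1) * Real.exp (-x / θ_rr) *
              uGamma m_sr
                (((P_r * x + 1) / (P_s * θ_sr)) *
                  Psi ((2 : ℝ) ^ (2 * r) - 1) (P_r * x * C / (P_r * x + 1))) := by
  obtain ⟨hC0, hC1⟩ := hC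
  set γ' : ℝ := (2 : ℝ) ^ (2 * r) with hγ'def
  have hγ' : 1 ≤ γ' := by
    have h := Real.rpow_le_rpow_of_exponent_le (by norm_num : (1:ℝ) ≤ 2)
      (by linarith : (0:ℝ) ≤ 2 * r)
    rwa [Real.rpow_zero] at h
  set A : ℝ → ℝ := fun v =>
    ((P_r * v + 1) / (P_s * θ_sr)) * Psi (γ' - 1) (P_r * v * C / (P_r * v + 1)) with hAdef
  set T : ℝ → ℝ := fun v =>
    ((P_r * v + 1) / P_s) * Psi (γ' - 1) (P_r * v * C / (P_r * v + 1)) with hTdef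
  have hTA : ∀ v, T v / θ_sr = A v := by
    intro v
    simp only [hTdef, hAdef]
    field_simp
  have hA : Measurable A := by
    simp only [hAdef]
    unfold Psi
    fun_prop
  have hT : Measurable T := by
    simp only [hTdef]
    unfold Psi
    fun_prop
  have hT0 : ∀ v : ℝ, 0 ≤ v → 0 ≤ T v := by
    intro v hv
    have hb : (0:ℝ) ≤ P_r * v := by positivity
    obtain ⟨hx0, hx1⟩ := frac_mem hb hC0 hC1
    have hψ : 0 ≤ Psi (γ' - 1) (P_r * v * C / (P_r * v + 1)) :=
      Psi_nonneg (by linarith) (by nlinarith)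
    have hq : (0:ℝ) ≤ (P_r * v + 1) / P_s := by positivity
    simp only [hTdef]
    exact mul_nonneg hq hψ
  have hA0 : ∀ v : ℝ, 0 ≤ v → 0 ≤ A v := by
    intro v hv
    rw [← hTA v]
    exact div_nonneg (hT0 v hv) hθ_sr.le
  have hGsr : (0:ℝ) < Real.Gamma m_sr := Real.Gamma_pos_of_pos (by exact_mod_cast hm_sr)
  have h1 : ∀ᵐ ω ∂μ, 0 ≤ g_sr ω := by
    rw [ae_iff]
    have h : {ω | ¬ 0 ≤ g_sr ω} = g_sr ⁻¹' (Set.Iio 0) := by ext ω; simp [not_le]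
    rw [h, ← Measure.map_apply hg_sr measurableSet_Iio, hlaw_sr]
    exact gammaLaw_Iio_zero _ _
  have h2 : ∀ᵐ ω ∂μ, 0 ≤ g_rr ω := by
    rw [ae_iff]
    have h : {ω | ¬ 0 ≤ g_rr ω} = g_rr ⁻¹' (Set.Iio 0) := by ext ω; simp [not_le]
    rw [h, ← Measure.map_apply hg_rr measurableSet_Iio, hlaw_rr]
    exact gammaLaw_Iio_zero _ _
  have hset : μ {ω | (P_s * g_sr ω + P_r * g_rr ω + 1) ^ 2 - (P_r * g_rr ω * C) ^ 2
          < γ' * ((P_r * g_rr ω + 1) ^ 2 - (P_r * g_rr ω * C) ^ 2)}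
      = μ {ω | g_sr ω < T (g_rr ω)} := by
    apply measure_congr
    rw [Filter.eventuallyEq_set]
    filter_upwards [h1, h2] with ω hω1 hω2
    simp only [Set.mem_setOf_eq, hTdef]
    exact event_iff hω1 hω2 hP_s hP_r hC0 hC1 hγ'
  rw [hset]
  haveI := gammaLaw_prob m_sr hm_sr hθ_sr
  haveI := gammaLaw_prob m_rr hm_rr hθ_rr
  have hpair : μ.map (fun ω => (g_rr ω, g_sr ω))
      = (gammaLaw m_rr θ_rr).prod (gammaLaw m_sr θ_sr) := by
    rw [← hlaw_rr, ← hlaw_sr]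
    exact (indepFun_iff_map_prod_eq_prod_map_map hg_rr.aemeasurable hg_sr.aemeasurable).mp
      hindep.symm
  have hs : MeasurableSet {p : ℝ × ℝ | p.2 < T p.1} :=
    measurableSet_lt measurable_snd (hT.comp measurable_fst)
  have hμE : μ {ω | g_sr ω < T (g_rr ω)}
      = ∫⁻ v, gammaLaw m_sr θ_sr (Set.Iio (T v)) ∂(gammaLaw m_rr θ_rr) := by
    have hpre : {ω | g_sr ω < T (g_rr ω)}
        = (fun ω => (g_rr ω, g_sr ω)) ⁻¹' {p : ℝ × ℝ | p.2 < T p.1} := rfl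
    rw [hpre, ← Measure.map_apply (hg_rr.prodMk hg_sr) hs, hpair, Measure.prod_apply hs]
    rfl
  rw [hμE]
  have hae : ∀ᵐ v ∂(gammaLaw m_rr θ_rr), 0 ≤ v := by
    rw [ae_iff]
    have h : {v : ℝ | ¬ 0 ≤ v} = Set.Iio 0 := by ext v; simp [not_le]
    rw [h]
    exact gammaLaw_Iio_zero _ _
  have hstep : ∫⁻ v, gammaLaw m_sr θ_sr (Set.Iio (T v)) ∂(gammaLaw m_rr θ_rr)
      = ∫⁻ v, ENNReal.ofReal (1 - phi m_sr (A v) / Real.Gamma m_sr)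
          ∂(gammaLaw m_rr θ_rr) := by
    apply lintegral_congr_ae
    filter_upwards [hae] with v hv
    rw [gammaLaw_Iio m_sr hm_sr hθ_sr (hT0 v hv), hTA v, phi_eq m_sr hm_sr (hA0 v hv)]
  rw [hstep]
  have hg_meas : Measurable fun v => ENNReal.ofReal (1 - phi m_sr (A v) / Real.Gamma m_sr) :=
    ENNReal.measurable_ofReal.comp
      (measurable_const.sub (((continuous_phi m_sr).measurable.comp hA).div_const _))
  rw [lintegral_gammaLaw m_rr θ_rr hg_meas]
  have hcomb : ∀ v : ℝ, ENNReal.ofReal (dens m_rr θ_rr v) *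
        ENNReal.ofReal (1 - phi m_sr (A v) / Real.Gamma m_sr)
      = ENNReal.ofReal (dens m_rr θ_rr v * (1 - phi m_sr (A v) / Real.Gamma m_sr)) := by
    intro v
    rw [ENNReal.ofReal_mul (dens_nonneg m_rr hθ_rr v)]
  simp_rw [hcomb]
  have hF_nonneg : ∀ v : ℝ, 0 ≤ dens m_rr θ_rr v * (1 - phi m_sr (A v) / Real.Gamma m_sr) := by
    intro v
    rcases le_or_gt 0 v with hv | hv
    · apply mul_nonneg (dens_nonneg m_rr hθ_rr v)
      rw [phi_eq m_sr hm_sr (hA0 v hv), sub_nonneg, div_le_one hGsr]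
      exact uGamma_le m_sr hm_sr (hA0 v hv)
    · rw [show dens m_rr θ_rr v = 0 by unfold dens; rw [if_neg (not_le.mpr hv)], zero_mul]
  have hF_meas : Measurable fun v => dens m_rr θ_rr v *
      (1 - phi m_sr (A v) / Real.Gamma m_sr) :=
    (measurable_dens m_rr θ_rr).mul (measurable_const.sub
      (((continuous_phi m_sr).measurable.comp hA).div_const _))
  rw [← integral_eq_lintegral_of_nonneg_ae (ae_of_all _ hF_nonneg)
    hF_meas.aestronglyMeasurable]
  have hind : (fun v => dens m_rr θ_rr v * (1 - phi m_sr (A v) / Real.Gamma m_sr))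
      = Set.indicator (Set.Ici 0) (fun v =>
          (v ^ (m_rr - 1) * Real.exp (-v / θ_rr)
            / ((Nat.factorial (m_rr - 1) : ℝ) * θ_rr ^ m_rr))
          * (1 - phi m_sr (A v) / Real.Gamma m_sr)) := by
    ext v
    rw [Set.indicator_apply]
    unfold dens
    simp only [Set.mem_Ici]
    split_ifs with hv
    · rfl
    · rw [zero_mul]
  rw [hind, integral_indicator measurableSet_Ici, MeasureTheory.integral_Ici_eq_integral_Ioi]
  have hρ_int : IntegrableOn (fun v : ℝ => v ^ (m_rr - 1) * Real.exp (-v / θ_rr)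
      / ((Nat.factorial (m_rr - 1) : ℝ) * θ_rr ^ m_rr)) (Set.Ioi 0) :=
    (integrableOn_density m_rr hm_rr hθ_rr le_rfl).div_const _
  have hfact_rr : Real.Gamma m_rr = (Nat.factorial (m_rr - 1) : ℝ) := by
    rw [show (m_rr : ℝ) = ((m_rr - 1 : ℕ) : ℝ) + 1 by
      have := Nat.cast_sub (R := ℝ) hm_rr (n := m_rr) (m := 1); push_cast at this ⊢; linarith]
    exact Real.Gamma_nat_eq_factorial _
  have hG_meas : Measurable fun v : ℝ => (v ^ (m_rr - 1) * Real.exp (-v / θ_rr)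
      / ((Nat.factorial (m_rr - 1) : ℝ) * θ_rr ^ m_rr))
      * (phi m_sr (A v) / Real.Gamma m_sr) := by
    apply Measurable.mul
    · fun_prop
    · exact ((continuous_phi m_sr).measurable.comp hA).div_const _
  have hG_int : IntegrableOn (fun v : ℝ => (v ^ (m_rr - 1) * Real.exp (-v / θ_rr)
      / ((Nat.factorial (m_rr - 1) : ℝ) * θ_rr ^ m_rr))
      * (phi m_sr (A v) / Real.Gamma m_sr)) (Set.Ioi 0) := by
    apply Integrable.mono' hρ_int hG_meas.aestronglyMeasurable
    filter_upwards [ae_restrict_mem measurableSet_Ioi] with v hv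
    have hv0 : (0:ℝ) ≤ v := le_of_lt hv
    have hA0v := hA0 v hv0
    have hρ0 : (0:ℝ) ≤ v ^ (m_rr - 1) * Real.exp (-v / θ_rr)
        / ((Nat.factorial (m_rr - 1) : ℝ) * θ_rr ^ m_rr) := by positivity
    have hG0 : 0 ≤ phi m_sr (A v) / Real.Gamma m_sr := by
      rw [phi_eq m_sr hm_sr hA0v]
      exact div_nonneg (uGamma_nonneg _ hA0v) hGsr.le
    have hG1 : phi m_sr (A v) / Real.Gamma m_sr ≤ 1 := by
      rw [phi_eq m_sr hm_sr hA0v, div_le_one hGsr]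
      exact uGamma_le m_sr hm_sr hA0v
    rw [Real.norm_eq_abs, abs_of_nonneg (mul_nonneg hρ0 hG0)]
    nlinarith
  have hsplit : ∫ v in Set.Ioi (0:ℝ), (v ^ (m_rr - 1) * Real.exp (-v / θ_rr)
        / ((Nat.factorial (m_rr - 1) : ℝ) * θ_rr ^ m_rr))
        * (1 - phi m_sr (A v) / Real.Gamma m_sr)
      = (∫ v in Set.Ioi (0:ℝ), v ^ (m_rr - 1) * Real.exp (-v / θ_rr)
          / ((Nat.factorial (m_rr - 1) : ℝ) * θ_rr ^ m_rr))
        - ∫ v in Set.Ioi (0:ℝ), (v ^ (m_rr - 1) * Real.exp (-v / θ_rr)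
          / ((Nat.factorial (m_rr - 1) : ℝ) * θ_rr ^ m_rr))
          * (phi m_sr (A v) / Real.Gamma m_sr) := by
    rw [← integral_sub hρ_int hG_int]
    apply setIntegral_congr_fun measurableSet_Ioi
    intro v hv
    ring
  rw [hsplit]
  have hρ_one : ∫ v in Set.Ioi (0:ℝ), v ^ (m_rr - 1) * Real.exp (-v / θ_rr)
      / ((Nat.factorial (m_rr - 1) : ℝ) * θ_rr ^ m_rr) = 1 := by
    rw [MeasureTheory.integral_div, integral_density_Ioi m_rr hm_rr hθ_rr 0, zero_div,
      uGamma_zero m_rr hm_rr, hfact_rr]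
    have hfac_pos : (0:ℝ) < (Nat.factorial (m_rr - 1) : ℝ) := by positivity
    field_simp
  rw [hρ_one]
  have hfinal : ∫ v in Set.Ioi (0:ℝ), (v ^ (m_rr - 1) * Real.exp (-v / θ_rr)
        / ((Nat.factorial (m_rr - 1) : ℝ) * θ_rr ^ m_rr))
        * (phi m_sr (A v) / Real.Gamma m_sr)
      = (1 / (Real.Gamma m_sr * Real.Gamma m_rr * θ_rr ^ m_rr)) *
        ∫ x in Set.Ioi (0:ℝ), x ^ (m_rr - 1) * Real.exp (-x / θ_rr)
          * uGamma m_sr (A x) := by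
    rw [← MeasureTheory.integral_const_mul]
    apply setIntegral_congr_fun measurableSet_Ioi
    intro v hv
    dsimp only
    rw [phi_eq m_sr hm_sr (hA0 v hv.le), hfact_rr]
    have hfac_pos : (0:ℝ) < (Nat.factorial (m_rr - 1) : ℝ) := by positivity
    field_simp
  rw [hfinal]
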